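/- Let H be a self-adjoint element (H = H*) of a unital C*-algebra 𝔄, let π : 𝔄 → B(ℋ) be a unital *-representation on a nonzero complex Hilbert space ℋ with a unit vector ψ that is cyclic (i.e., {π(A)ψ : A ∈ 𝔄} is dense in ℋ), let ω(A) := ⟨ψ, π(A)ψ⟩, and assume ω is a ground state for H, i.e., λ* := ω(H) = min Spec(π(H)). Then the following are equivalent: (a) there exists Δ > 0 such that Spec(π(H)) ∩ (λ*, λ* + Δ) = ∅ and the kernel of π(H) − λ*·1 is the one-dimensional subspace ℂ·ψ (non-degenerate gapped ground state); (b) there exists Δ > 0 such that for every A ∈ 𝔄 the number ω(A* H A − A* A H) is real and satisfies ω(A* H A − A* A H) ≥ Δ·(ω(A* A) − |ω(A)|²). -/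

import Mathlib

set_option synthInstance.maxHeartbeats 1000000
set_option maxHeartbeats 1000000
open scoped Pointwise


variable {𝔄 : Type*} [CStarAlgebra 𝔄]

/-- A state on a unital C*-algebra `𝔄`: a continuous linear functional `ω : 𝔄 → ℂ`
which is normalized (`ω 1 = 1`) and positive (`ω (a* a)` is a nonnegative real number). -/
def IsState (ω : 𝔄 → ℂ) : Prop :=
  Continuous ω ∧ IsLinearMap ℂ ω ∧ ω 1 = 1 ∧
    ∀ a : 𝔄, ∃ r : ℝ, 0 ≤ r ∧ ω (star a * a) = (r : ℂ)

/-- `ω` is an eigenstate of `A` with eigenvalue `l` if `ω (B * A) = l * ω B` for all `B`. -/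
def IsEigenstate (ω : 𝔄 → ℂ) (A : 𝔄) (l : ℂ) : Prop :=
  ∀ B : 𝔄, ω (B * A) = l * ω B

section KeyLemmas
lemma aux_ker_vec {E : Type*} [NormedAddCommGroup E] [InnerProductSpace ℂ E] [CompleteSpace E]
    (S : E →L[ℂ] E) (hS : 0 ≤ S) (ψ : E) (h0 : (inner ℂ ψ (S ψ) : ℂ) = 0) : S ψ = 0 := by
  have hR : CFC.sqrt S * CFC.sqrt S = S := CFC.sqrt_mul_sqrt_self S hS
  have hRsa : IsSelfAdjoint (CFC.sqrt S) := IsSelfAdjoint.of_nonneg (CFC.sqrt_nonneg S)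
  have key : (inner ℂ (CFC.sqrt S ψ) (CFC.sqrt S ψ) : ℂ) = 0 := by
    calc (inner ℂ (CFC.sqrt S ψ) (CFC.sqrt S ψ) : ℂ)
        = inner ℂ ψ ((ContinuousLinearMap.adjoint (CFC.sqrt S)) (CFC.sqrt S ψ)) :=
          (ContinuousLinearMap.adjoint_inner_right _ _ _).symm
      _ = inner ℂ ψ (S ψ) := by
          rw [← ContinuousLinearMap.star_eq_adjoint, hRsa.star_eq, ← ContinuousLinearMap.mul_apply, hR]
      _ = 0 := h0
  have hz : CFC.sqrt S ψ = 0 := inner_self_eq_zero.mp key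
  calc S ψ = CFC.sqrt S (CFC.sqrt S ψ) := by rw [← ContinuousLinearMap.mul_apply, hR]
    _ = 0 := by rw [hz, map_zero]

lemma aux_cfc_ker {E : Type*} [NormedAddCommGroup E] [InnerProductSpace ℂ E] [CompleteSpace E]
    (S : E →L[ℂ] E) (hsa : IsSelfAdjoint S) (ψ : E) (hSψ : S ψ = 0)
    (g : ℝ → ℝ) (hg : Continuous g) : cfc (fun x => g x * x) S ψ = 0 := by
  rw [cfc_mul (fun x => g x) (fun x => x) S (hg.continuousOn) (continuousOn_id)]
  rw [cfc_id' ℝ S, ContinuousLinearMap.mul_apply, hSψ, map_zero]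

lemma aux_sa_inner {E : Type*} [NormedAddCommGroup E] [InnerProductSpace ℂ E] [CompleteSpace E]
    {S : E →L[ℂ] E} (hsa : IsSelfAdjoint S) (x y : E) :
    (inner ℂ (S x) y : ℂ) = inner ℂ x (S y) := by
  conv_lhs => rw [← hsa.star_eq, ContinuousLinearMap.star_eq_adjoint]
  exact ContinuousLinearMap.adjoint_inner_left _ _ _

lemma key_forward {E : Type*} [NormedAddCommGroup E] [InnerProductSpace ℂ E] [CompleteSpace E]
    (S : E →L[ℂ] E) (hsa : IsSelfAdjoint S) (hS0 : 0 ≤ S) (ψ : E) (hψ : ‖ψ‖ = 1)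
    (hSψ : S ψ = 0) (Δ : ℝ) (hΔ : 0 < Δ)
    (hgap : spectrum ℝ S ∩ Set.Ioo 0 Δ = ∅)
    (hker : LinearMap.ker (S : E →ₗ[ℂ] E) = Submodule.span ℂ {ψ}) :
    ∀ φ : E, Δ * (‖φ‖^2 - ‖(inner ℂ ψ φ : ℂ)‖^2) ≤ (inner ℂ φ (S φ) : ℂ).re := by
  have hspec : ∀ x ∈ spectrum ℝ S, x = 0 ∨ Δ ≤ x := by
    intro x hx
    have hx0 : 0 ≤ x := (StarOrderedRing.nonneg_iff_spectrum_nonneg (R := ℝ) S hsa).mp hS0 x hx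
    rcases eq_or_lt_of_le hx0 with h | h
    · exact Or.inl h.symm
    rcases le_or_gt Δ x with h' | h'
    · exact Or.inr h'
    · exfalso
      have hmem : x ∈ spectrum ℝ S ∩ Set.Ioo 0 Δ := ⟨hx, h, h'⟩
      rw [hgap] at hmem
      exact hmem
  set m : ℝ → ℝ := fun x => (max x Δ)⁻¹ with hm_def
  have hm : Continuous m :=
    (continuous_id.max continuous_const).inv₀ fun x => ne_of_gt (lt_of_lt_of_le hΔ (le_max_right _ _))
  set f : ℝ → ℝ := fun x => 1 - m x * x with hf_def
  have hf : Continuous f := continuous_const.sub (hm.mul continuous_id)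
  have hf0 : f 0 = 1 := by simp [hf_def]
  have hfΔ : ∀ x, Δ ≤ x → f x = 0 := by
    intro x hx
    have hx0 : x ≠ 0 := ne_of_gt (lt_of_lt_of_le hΔ hx)
    simp [hf_def, hm_def, max_eq_left hx, inv_mul_cancel₀ hx0]
  set E₀ := cfc f S with hE₀_def
  have hsaE : IsSelfAdjoint E₀ := cfc_predicate f S
  have hone : cfc (fun _ : ℝ => (1:ℝ)) S = 1 := by
    rw [cfc_const (1:ℝ) S, map_one]
  have hEψ : E₀ ψ = ψ := by
    rw [hE₀_def, cfc_sub (fun _ => (1:ℝ)) (fun x => m x * x) S (by fun_prop) (by fun_prop)]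
    rw [hone, ContinuousLinearMap.sub_apply, aux_cfc_ker S hsa ψ hSψ m hm,
      ContinuousLinearMap.one_apply, sub_zero]
  have hSE : ∀ χ : E, S (E₀ χ) = 0 := by
    have h1 : cfc (fun x : ℝ => x * f x) S = S * E₀ := by
      rw [cfc_mul (fun x => x) f S (by fun_prop) (hf.continuousOn), cfc_id' ℝ S]
    have h2 : cfc (fun x : ℝ => x * f x) S = 0 := by
      have : cfc (fun x : ℝ => x * f x) S = cfc (fun _ : ℝ => (0:ℝ)) S := by
        apply cfc_congr
        intro x hx
        rcases hspec x hx with h | h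
        · simp [h]
        · simp [hfΔ x h]
      rw [this]; exact cfc_zero ℝ S
    intro χ
    calc S (E₀ χ) = (S * E₀) χ := rfl
      _ = 0 := by rw [← h1, h2]; rfl
  have hψψ : (inner ℂ ψ ψ : ℂ) = 1 := by
    rw [inner_self_eq_norm_sq_to_K, hψ]; norm_num
  have hE : ∀ χ : E, E₀ χ = (inner ℂ ψ χ : ℂ) • ψ := by
    intro χ
    have hmem : E₀ χ ∈ LinearMap.ker (S : E →ₗ[ℂ] E) := by
      simpa [LinearMap.mem_ker] using hSE χ
    rw [hker, Submodule.mem_span_singleton] at hmem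
    obtain ⟨c, hc⟩ := hmem
    have h1 : (inner ℂ ψ (E₀ χ) : ℂ) = c := by
      rw [← hc, inner_smul_right, hψψ, mul_one]
    have h2 : (inner ℂ ψ (E₀ χ) : ℂ) = inner ℂ ψ χ := by
      rw [← aux_sa_inner hsaE, hEψ]
    rw [← hc, ← h1, h2]
  have hM : (0 : E →L[ℂ] E) ≤ S - Δ • (1 - E₀) := by
    have heq : S - Δ • (1 - E₀) = cfc (fun x => x - Δ * (1 - f x)) S := by
      rw [cfc_sub (fun x => x) (fun x => Δ * (1 - f x)) S (by fun_prop) (by fun_prop)]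
      rw [cfc_id' ℝ S]
      congr 1
      have hfun : (fun x : ℝ => Δ * (1 - f x)) = fun x => Δ • (1 - f x) := by
        simp [smul_eq_mul]
      rw [hfun, cfc_smul Δ (fun x => 1 - f x) S (by fun_prop)]
      rw [cfc_sub (fun _ => (1:ℝ)) f S (by fun_prop) (hf.continuousOn), hone]
    rw [heq]
    apply cfc_nonneg
    intro x hx
    rcases hspec x hx with h | h
    · simp [h, hf0]
    · rw [hfΔ x h]
      simp only [sub_zero, mul_one]
      linarith
  intro φ
  have hpos := ((ContinuousLinearMap.nonneg_iff_isPositive _).mp hM).inner_nonneg_right φ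
  have hpos' : (0:ℝ) ≤ (inner ℂ φ ((S - Δ • (1 - E₀)) φ) : ℂ).re := (Complex.nonneg_iff.mp hpos).1
  have hEφ : (inner ℂ φ (E₀ φ) : ℂ) = (‖(inner ℂ ψ φ : ℂ)‖^2 : ℝ) := by
    rw [hE φ, inner_smul_right, ← inner_conj_symm φ ψ, Complex.mul_conj]
    norm_num [Complex.sq_norm]
  have hexp : (inner ℂ φ ((S - Δ • (1 - E₀)) φ) : ℂ).re
      = (inner ℂ φ (S φ) : ℂ).re - Δ * (‖φ‖^2 - ‖(inner ℂ ψ φ : ℂ)‖^2) := by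
    have hsm : Δ • (φ - E₀ φ) = ((Δ : ℂ)) • (φ - E₀ φ) :=
      RCLike.real_smul_eq_coe_smul (K := ℂ) Δ (φ - E₀ φ)
    simp only [ContinuousLinearMap.sub_apply, ContinuousLinearMap.smul_apply,
      ContinuousLinearMap.one_apply, inner_sub_right, hsm, inner_smul_right, hEφ]
    have hnorm : (inner ℂ φ φ : ℂ).re = ‖φ‖^2 := by
      exact (norm_sq_eq_re_inner (𝕜 := ℂ) φ).symm
    have him : (inner ℂ φ φ : ℂ).im = 0 := by
      exact inner_self_im (𝕜 := ℂ) φ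
    simp only [Complex.sub_re, Complex.sub_im, Complex.mul_re, Complex.ofReal_re,
      Complex.ofReal_im, hnorm, him]
    ring
  rw [hexp] at hpos'
  linarith

lemma aux_norm_sub {E : Type*} [NormedAddCommGroup E] [InnerProductSpace ℂ E]
    (ψ φ : E) (hψ : ‖ψ‖ = 1) :
    ‖φ - (inner ℂ ψ φ : ℂ) • ψ‖^2 = ‖φ‖^2 - ‖(inner ℂ ψ φ : ℂ)‖^2 := by
  set c : ℂ := inner ℂ ψ φ with hc
  have h1 : (inner ℂ φ ((c : ℂ) • ψ) : ℂ) = c * (starRingEnd ℂ) c := by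
    rw [inner_smul_right, ← inner_conj_symm φ ψ]
  have h2 : ‖(c : ℂ) • ψ‖^2 = ‖c‖^2 := by
    rw [norm_smul, hψ, mul_one]
  rw [@norm_sub_sq ℂ, h1, h2]
  rw [Complex.mul_conj]
  simp [Complex.sq_norm]
  ring

lemma key_backward {E : Type*} [NormedAddCommGroup E] [InnerProductSpace ℂ E] [CompleteSpace E]
    (S : E →L[ℂ] E) (hsa : IsSelfAdjoint S) (ψ : E) (hψ : ‖ψ‖ = 1)
    (hSψ : S ψ = 0) (Δ : ℝ) (hΔ : 0 < Δ)
    (hineq : ∀ φ : E, Δ * (‖φ‖^2 - ‖(inner ℂ ψ φ : ℂ)‖^2) ≤ (inner ℂ φ (S φ) : ℂ).re) :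
    spectrum ℝ S ∩ Set.Ioo 0 Δ = ∅ ∧ LinearMap.ker (S : E →ₗ[ℂ] E) = Submodule.span ℂ {ψ} := by
  constructor
  · rw [Set.eq_empty_iff_forall_notMem]
    rintro t ⟨hts, ht0, htΔ⟩
    set ε : ℝ := min t (Δ - t) / 2 with hε_def
    have hε0 : 0 < ε := by
      rw [hε_def]
      have h1 := lt_min ht0 (show (0:ℝ) < Δ - t by linarith)
      linarith
    have hεt : ε < t := by
      rw [hε_def]
      have h1 := min_le_left t (Δ - t)
      linarith
    have hεΔ : t + ε < Δ := by
      rw [hε_def]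
      have h1 := min_le_right t (Δ - t)
      linarith
    set g : ℝ → ℝ := fun x => max 0 (ε - |x - t|) with hg_def
    have hg : Continuous g :=
      continuous_const.max (continuous_const.sub (continuous_id.sub continuous_const).abs)
    have hg0 : ∀ x, 0 ≤ g x := fun x => le_max_left _ _
    have hgz : ∀ x, x ≤ t - ε → g x = 0 := by
      intro x hx
      apply max_eq_left
      have : ε ≤ |x - t| := by
        rw [abs_sub_comm, abs_of_nonneg (by linarith)]
        linarith
      linarith
    have hgsupp : ∀ x, g x ≠ 0 → t - ε < x ∧ x < t + ε := by
      intro x hx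
      by_contra hcon
      push_neg at hcon
      rcases le_or_gt x (t - ε) with h | h
      · exact hx (hgz x h)
      · have hge : t + ε ≤ x := hcon h
        apply hx
        apply max_eq_left
        rw [abs_of_nonneg (by linarith)]
        linarith
    set h : ℝ → ℝ := fun x => g x / max x (t - ε) with hh_def
    have hmaxpos : ∀ x : ℝ, (0:ℝ) < max x (t - ε) := fun x =>
      lt_of_lt_of_le (by linarith) (le_max_right _ _)
    have hh : Continuous h :=
      hg.div (continuous_id.max continuous_const) fun x => ne_of_gt (hmaxpos x)
    have hfac : (fun x => h x * x) = g := by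
      funext x
      rcases le_or_gt x (t - ε) with hx | hx
      · rw [hgz x hx]
        simp [hh_def, hgz x hx]
      · have hmax : max x (t - ε) = x := max_eq_left hx.le
        have hx0 : x ≠ 0 := ne_of_gt (by linarith)
        simp [hh_def, hmax]
        field_simp
    set G := cfc g S with hG_def
    have hGsa : IsSelfAdjoint G := cfc_predicate g S
    have hGψ : G ψ = 0 := by
      rw [hG_def, ← hfac]
      exact aux_cfc_ker S hsa ψ hSψ h hh
    have hGne : G ≠ 0 := by
      intro hG0
      have hle := nnnorm_apply_le_nnnorm_cfc g S hts
      rw [← hG_def, hG0, nnnorm_zero, le_zero_iff, nnnorm_eq_zero] at hle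
      have : g t = ε := by simp [hg_def, le_of_lt hε0]
      rw [this] at hle
      exact ne_of_gt hε0 hle
    obtain ⟨χ, hχ⟩ : ∃ χ : E, G χ ≠ 0 := by
      by_contra hcon
      push_neg at hcon
      exact hGne (ContinuousLinearMap.ext fun χ => by rw [hcon χ]; rfl)
    set φ := G χ with hφ_def
    have hψφ : (inner ℂ ψ φ : ℂ) = 0 := by
      rw [hφ_def, ← aux_sa_inner hGsa, hGψ, inner_zero_left]
    have hlow : Δ * ‖φ‖^2 ≤ (inner ℂ φ (S φ) : ℂ).re := by
      have := hineq φ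
      rw [hψφ] at this
      simpa using this
    -- upper bound
    have hN : (0 : E →L[ℂ] E) ≤ cfc (fun x => (t+ε) * (g x * g x) - g x * x * g x) S := by
      apply cfc_nonneg
      intro x _
      rcases eq_or_ne (g x) 0 with h0 | h0
      · simp [h0]
      · obtain ⟨h1, h2⟩ := hgsupp x h0
        have := hg0 x
        nlinarith
    have hGG : cfc (fun x => g x * g x) S = G * G :=
      cfc_mul g g S (hg.continuousOn) (hg.continuousOn)
    have hGS : cfc (fun x => g x * x) S = G * S := by
      rw [cfc_mul g (fun x => x) S (hg.continuousOn) continuousOn_id, cfc_id' ℝ S]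
    have hGSG : cfc (fun x => g x * x * g x) S = G * S * G := by
      rw [cfc_mul (fun x => g x * x) g S (by fun_prop) (hg.continuousOn), hGS]
    have hsmul : cfc (fun x => (t+ε) * (g x * g x)) S = (t+ε) • (G * G) := by
      have hfun : (fun x : ℝ => (t+ε) * (g x * g x)) = fun x => (t+ε) • (g x * g x) := by
        simp [smul_eq_mul]
      rw [hfun, cfc_smul (t+ε) (fun x => g x * g x) S (by fun_prop), hGG]
    have hNdec : cfc (fun x => (t+ε) * (g x * g x) - g x * x * g x) S
        = (t+ε) • (G * G) - G * S * G := by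
      rw [cfc_sub (fun x => (t+ε) * (g x * g x)) (fun x => g x * x * g x) S
        (by fun_prop) (by fun_prop), hsmul, hGSG]
    rw [hNdec] at hN
    have hpos := ((ContinuousLinearMap.nonneg_iff_isPositive _).mp hN).inner_nonneg_right χ
    have hpos' : (0:ℝ) ≤ (inner ℂ χ (((t+ε) • (G * G) - G * S * G) χ) : ℂ).re := (Complex.nonneg_iff.mp hpos).1
    have hid1 : (inner ℂ χ ((G * G) χ) : ℂ) = inner ℂ φ φ := by
      rw [ContinuousLinearMap.mul_apply, ← aux_sa_inner hGsa]
    have hid2 : (inner ℂ χ ((G * S * G) χ) : ℂ) = inner ℂ φ (S φ) := by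
      rw [ContinuousLinearMap.mul_apply, ContinuousLinearMap.mul_apply, ← aux_sa_inner hGsa]
    have hnorm : (inner ℂ φ φ : ℂ).re = ‖φ‖^2 := (norm_sq_eq_re_inner (𝕜 := ℂ) φ).symm
    have him : (inner ℂ φ φ : ℂ).im = 0 := inner_self_im (𝕜 := ℂ) φ
    have hexp : (inner ℂ χ (((t+ε) • (G * G) - G * S * G) χ) : ℂ).re
        = (t+ε) * ‖φ‖^2 - (inner ℂ φ (S φ) : ℂ).re := by
      have hsm : ((t+ε) • (G * G)) χ = ((t+ε:ℝ):ℂ) • ((G * G) χ) := by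
        rw [ContinuousLinearMap.smul_apply, RCLike.real_smul_eq_coe_smul (K := ℂ)]
        rfl
      simp only [ContinuousLinearMap.sub_apply, inner_sub_right, hsm, inner_smul_right,
        hid1, hid2]
      simp only [Complex.sub_re, Complex.mul_re, Complex.ofReal_re, Complex.ofReal_im,
        hnorm, him]
      ring
    rw [hexp] at hpos'
    have hφpos : 0 < ‖φ‖^2 := by
      have h1 : 0 < ‖φ‖ := norm_pos_iff.mpr hχ
      positivity
    nlinarith
  · apply le_antisymm
    · intro φ hφ
      rw [LinearMap.mem_ker] at hφ
      have h0 : (inner ℂ φ (S φ) : ℂ).re = 0 := by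
        rw [show S φ = 0 from hφ, inner_zero_right]
        rfl
      have := hineq φ
      rw [h0] at this
      have hsub : ‖φ - (inner ℂ ψ φ : ℂ) • ψ‖^2 ≤ 0 := by
        rw [aux_norm_sub ψ φ hψ]
        nlinarith
      have : φ - (inner ℂ ψ φ : ℂ) • ψ = 0 := by
        rw [← norm_le_zero_iff]
        nlinarith [norm_nonneg (φ - (inner ℂ ψ φ : ℂ) • ψ)]
      rw [Submodule.mem_span_singleton]
      exact ⟨inner ℂ ψ φ, (sub_eq_zero.mp this).symm⟩
    · rw [Submodule.span_le, Set.singleton_subset_iff]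
      exact LinearMap.mem_ker.mpr hSψ

end KeyLemmas

/-- For a ground state `ω = ⟨ψ, π(·)ψ⟩` of a self-adjoint `H` (realized in a cyclic
representation, with ground state energy `λ⋆ = min Spec (π H)`), being a non-degenerate
gapped ground state is equivalent to the dynamical inequality
`ω (A* H A - A* A H) ≥ Δ (ω (A* A) - |ω A|²)` for some `Δ > 0` and all `A`. -/
theorem gapped_ground_state_iff {H : Type*} [NormedAddCommGroup H]
    [InnerProductSpace ℂ H] [CompleteSpace H] [Nontrivial H]
    (Hop : 𝔄) (hH : star Hop = Hop) (π : 𝔄 →⋆ₐ[ℂ] (H →L[ℂ] H)) (ψ : H) (hψ : ‖ψ‖ = 1)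
    (hcyc : Dense {x : H | ∃ A : 𝔄, x = π A ψ})
    (ω : 𝔄 → ℂ) (hω : ∀ A : 𝔄, ω A = (inner ℂ ψ (π A ψ) : ℂ))
    (lstar : ℝ) (hl₁ : ω Hop = (lstar : ℂ)) (hl₂ : lstar = sInf (spectrum ℝ (π Hop))) :
    (∃ Δ : ℝ, 0 < Δ ∧ spectrum ℝ (π Hop) ∩ Set.Ioo lstar (lstar + Δ) = ∅ ∧
        LinearMap.ker ((π Hop - (lstar : ℂ) • (1 : H →L[ℂ] H)) : H →ₗ[ℂ] H) = Submodule.span ℂ {ψ}) ↔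
      (∃ Δ : ℝ, 0 < Δ ∧ ∀ A : 𝔄, ∃ r s : ℝ,
        ω (star A * Hop * A - star A * A * Hop) = (r : ℂ) ∧
        ω (star A * A) = (s : ℂ) ∧ Δ * (s - ‖ω A‖ ^ 2) ≤ r) := by
  have hTsa : IsSelfAdjoint (π Hop) := by
    rw [IsSelfAdjoint, ← map_star, hH]
  haveI : Nontrivial (H →L[ℂ] H) := by
    obtain ⟨x, hx⟩ := exists_ne (0 : H)
    refine ⟨1, 0, fun h => hx ?_⟩
    calc x = (1 : H →L[ℂ] H) x := rfl
      _ = (0 : H →L[ℂ] H) x := by rw [h]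
      _ = 0 := rfl
  have hbdd : BddBelow (spectrum ℝ (π Hop)) := (spectrum.isBounded (π Hop)).bddBelow
  have hlb : ∀ x ∈ spectrum ℝ (π Hop), lstar ≤ x := fun x hx => hl₂ ▸ csInf_le hbdd hx
  set S : H →L[ℂ] H := π Hop - (lstar : ℂ) • 1 with hS_def
  have hSsa : IsSelfAdjoint S := by
    rw [IsSelfAdjoint, hS_def, star_sub, star_smul, star_one, hTsa.star_eq,
      Complex.star_def, Complex.conj_ofReal]
  have halg : algebraMap ℝ (H →L[ℂ] H) lstar = (lstar : ℂ) • 1 := by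
    rw [Algebra.algebraMap_eq_smul_one, ← algebraMap_smul ℂ lstar (1 : H →L[ℂ] H),
      Complex.coe_algebraMap]
  have hspecS : spectrum ℝ S = spectrum ℝ (π Hop) - ({lstar} : Set ℝ) := by
    rw [hS_def, ← halg]
    exact (spectrum.sub_singleton_eq (π Hop) lstar).symm
  have hspecS' : ∀ x ∈ spectrum ℝ S, ∃ y ∈ spectrum ℝ (π Hop), y - lstar = x := by
    intro x hx
    rw [hspecS, Set.sub_singleton] at hx
    obtain ⟨y, hy, hyx⟩ := hx
    exact ⟨y, hy, hyx⟩
  have hS0 : (0 : H →L[ℂ] H) ≤ S := by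
    rw [StarOrderedRing.nonneg_iff_spectrum_nonneg (R := ℝ) S hSsa]
    intro x hx
    obtain ⟨y, hy, rfl⟩ := hspecS' x hx
    have := hlb y hy
    linarith
  have hψψ : (inner ℂ ψ ψ : ℂ) = 1 := by
    rw [inner_self_eq_norm_sq_to_K, hψ]; norm_num
  have hSψ : S ψ = 0 := by
    apply aux_ker_vec S hS0 ψ
    rw [hS_def, ContinuousLinearMap.sub_apply, ContinuousLinearMap.smul_apply,
      ContinuousLinearMap.one_apply, inner_sub_right, inner_smul_right, hψψ, mul_one]
    rw [← hω Hop, hl₁, sub_self]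
  have hTψ : π Hop ψ = (lstar : ℂ) • ψ := by
    have := hSψ
    rw [hS_def, ContinuousLinearMap.sub_apply, ContinuousLinearMap.smul_apply,
      ContinuousLinearMap.one_apply, sub_eq_zero] at this
    exact this
  -- the basic computations
  have hc1 : ∀ A : 𝔄, ω (star A * Hop * A - star A * A * Hop)
      = (inner ℂ (π A ψ) (S (π A ψ)) : ℂ) := by
    intro A
    rw [hω, map_sub, map_mul, map_mul, map_mul, map_mul, map_star,
      ContinuousLinearMap.star_eq_adjoint]
    simp only [ContinuousLinearMap.sub_apply, ContinuousLinearMap.mul_apply]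
    rw [inner_sub_right, ContinuousLinearMap.adjoint_inner_right,
      ContinuousLinearMap.adjoint_inner_right]
    rw [hS_def]
    simp only [ContinuousLinearMap.sub_apply, ContinuousLinearMap.smul_apply,
      ContinuousLinearMap.one_apply, inner_sub_right, hTψ, map_smul, inner_smul_right]
  have hc3 : ∀ A : 𝔄, ω (star A * A) = (inner ℂ (π A ψ) (π A ψ) : ℂ) := by
    intro A
    rw [hω, map_mul, map_star, ContinuousLinearMap.star_eq_adjoint,
      ContinuousLinearMap.mul_apply, ContinuousLinearMap.adjoint_inner_right]
  have hnormsq : ∀ φ : H, (inner ℂ φ φ : ℂ) = ((‖φ‖^2 : ℝ) : ℂ) := by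
    intro φ
    rw [inner_self_eq_norm_sq_to_K]
    norm_num
  have hreal : ∀ φ : H, (inner ℂ φ (S φ) : ℂ) = (((inner ℂ φ (S φ) : ℂ).re : ℝ) : ℂ) := by
    intro φ
    have h1 : (starRingEnd ℂ) (inner ℂ φ (S φ) : ℂ) = (inner ℂ φ (S φ) : ℂ) := by
      rw [inner_conj_symm, aux_sa_inner hSsa]
    exact (Complex.conj_eq_iff_re.mp h1).symm
  constructor
  · rintro ⟨Δ, hΔ, hgap, hker⟩
    have hgapS : spectrum ℝ S ∩ Set.Ioo 0 Δ = ∅ := by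
      rw [Set.eq_empty_iff_forall_notMem]
      rintro x ⟨hxS, hx0, hxΔ⟩
      obtain ⟨y, hy, rfl⟩ := hspecS' x hxS
      have : y ∈ spectrum ℝ (π Hop) ∩ Set.Ioo lstar (lstar + Δ) :=
        ⟨hy, by linarith, by linarith⟩
      rw [hgap] at this
      exact this
    have hineq := key_forward S hSsa hS0 ψ hψ hSψ Δ hΔ hgapS hker
    refine ⟨Δ, hΔ, fun A => ?_⟩
    refine ⟨(inner ℂ (π A ψ) (S (π A ψ)) : ℂ).re, ‖π A ψ‖^2, ?_, ?_, ?_⟩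
    · rw [hc1 A]; exact hreal _
    · rw [hc3 A]; exact hnormsq _
    · have := hineq (π A ψ)
      rw [hω A]
      exact this
  · rintro ⟨Δ, hΔ, hA⟩
    have hineq : ∀ φ : H, Δ * (‖φ‖^2 - ‖(inner ℂ ψ φ : ℂ)‖^2)
        ≤ (inner ℂ φ (S φ) : ℂ).re := by
      have hclosed : IsClosed {φ : H |
          Δ * (‖φ‖^2 - ‖(inner ℂ ψ φ : ℂ)‖^2) ≤ (inner ℂ φ (S φ) : ℂ).re} := by
        apply isClosed_le
        · apply Continuous.mul continuous_const
          apply Continuous.sub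
          · exact (continuous_norm).pow 2
          · exact (continuous_norm.comp (Continuous.inner continuous_const
              continuous_id)).pow 2
        · exact Complex.continuous_re.comp (Continuous.inner continuous_id S.continuous)
      have hsub : {x : H | ∃ A : 𝔄, x = π A ψ} ⊆ {φ : H |
          Δ * (‖φ‖^2 - ‖(inner ℂ ψ φ : ℂ)‖^2) ≤ (inner ℂ φ (S φ) : ℂ).re} := by
        rintro x ⟨A, rfl⟩
        obtain ⟨r, s, h1, h2, h3⟩ := hA A
        have hr : (inner ℂ (π A ψ) (S (π A ψ)) : ℂ).re = r := by
          rw [← hc1 A] at *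
          rw [h1]
          norm_num
        have hs : ‖π A ψ‖^2 = s := by
          have := (hnormsq (π A ψ)).symm.trans ((hc3 A).symm.trans h2)
          exact_mod_cast this
        have habs : ‖ω A‖ = ‖(inner ℂ ψ (π A ψ) : ℂ)‖ := by
          rw [hω A]
        rw [Set.mem_setOf_eq, hr, hs, ← habs]
        exact h3
      intro φ
      have : closure {x : H | ∃ A : 𝔄, x = π A ψ} ⊆ {φ : H |
          Δ * (‖φ‖^2 - ‖(inner ℂ ψ φ : ℂ)‖^2) ≤ (inner ℂ φ (S φ) : ℂ).re} :=
        hclosed.closure_subset_iff.mpr hsub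
      rw [hcyc.closure_eq] at this
      exact this (Set.mem_univ φ)
    obtain ⟨hgapS, hkerS⟩ := key_backward S hSsa ψ hψ hSψ Δ hΔ hineq
    refine ⟨Δ, hΔ, ?_, hkerS⟩
    rw [Set.eq_empty_iff_forall_notMem]
    rintro y ⟨hyT, hy1, hy2⟩
    have hymem : y - lstar ∈ spectrum ℝ S := by
      rw [hspecS, Set.sub_singleton]
      exact ⟨y, hyT, rfl⟩
    have : y - lstar ∈ spectrum ℝ S ∩ Set.Ioo 0 Δ :=
      ⟨hymem, by linarith, by linarith⟩
    rw [hgapS] at this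
    exact this
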